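/- There exists a universal constant C > 0 such that the following holds. Let x_1,...,x_n be independent uniform ±1 random variables and a_i ≥ 0 with ∑ a_i² = 1. If t ≥ 0 and ε = Pr[∑ a_i x_i > t], then Pr[∑ a_i x_i > t + C/√(log(1/ε))] ≤ ε/2. -/

import Mathlib

open Finset

noncomputable section
open scoped Classical

/-- The ±1 value associated to a Boolean bit. -/
def sgn1 (b : Bool) : ℝ := if b then 1 else -1

/-- Probability of an event under the uniform measure on `{-1,1}^n`. -/
def cubePr (n : ℕ) (P : (Fin n → Bool) → Prop) : ℝ :=
  ((univ.filter P).card : ℝ) / 2 ^ n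

/-- Expectation of a function under the uniform measure on `{-1,1}^n`. -/
def cubeE (n : ℕ) (f : (Fin n → Bool) → ℝ) : ℝ := (∑ x, f x) / 2 ^ n

/-- The linear form `a · x = ∑ aᵢ xᵢ` on `{-1,1}^n`. -/
def lin (n : ℕ) (a : Fin n → ℝ) (x : Fin n → Bool) : ℝ := ∑ i, a i * sgn1 (x i)

/-- The halfspace `1{a · x > t}` as a 0/1-valued function. -/
def halfspace (n : ℕ) (a : Fin n → ℝ) (t : ℝ) (x : Fin n → Bool) : ℝ :=
  if t < lin n a x then 1 else 0

/-- The influence of coordinate `i` on `f`: the probability that flipping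
coordinate `i` changes the value of `f`. -/
def infl (n : ℕ) (i : Fin n) (f : (Fin n → Bool) → ℝ) : ℝ :=
  cubePr n (fun x => f x ≠ f (Function.update x i (!x i)))

/-- The degree-1 Fourier coefficient `f̂({i}) = E[f(x)·xᵢ]`. -/
def fCoeff (n : ℕ) (f : (Fin n → Bool) → ℝ) (i : Fin n) : ℝ :=
  cubeE n (fun x => f x * sgn1 (x i))

/-- The degree-1 Fourier weight `W¹(f) = ∑ᵢ f̂({i})²`. -/
def W1 (n : ℕ) (f : (Fin n → Bool) → ℝ) : ℝ := ∑ i, (fCoeff n f i) ^ 2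


namespace LC

lemma sgn1_true : sgn1 true = 1 := rfl
lemma sgn1_false : sgn1 false = -1 := rfl
lemma sgn1_not (b : Bool) : sgn1 (!b) = - sgn1 b := by cases b <;> simp [sgn1]
lemma sgn1_sq (b : Bool) : sgn1 b ^ 2 = 1 := by cases b <;> norm_num [sgn1]
lemma sgn1_le_one (b : Bool) : sgn1 b ≤ 1 := by cases b <;> norm_num [sgn1]

lemma card_cube (n : ℕ) : ((univ : Finset (Fin n → Bool)).card : ℝ) = 2 ^ n := by
  rw [Finset.card_univ]
  simp [Fintype.card_fun]

lemma two_pow_pos (n : ℕ) : (0:ℝ) < 2 ^ n := by positivity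

lemma cubePr_nonneg (n : ℕ) (P : (Fin n → Bool) → Prop) : 0 ≤ cubePr n P := by
  unfold cubePr; positivity

lemma cubePr_mono {n : ℕ} {P Q : (Fin n → Bool) → Prop} (h : ∀ x, P x → Q x) :
    cubePr n P ≤ cubePr n Q := by
  unfold cubePr
  refine div_le_div_of_nonneg_right ?_ (two_pow_pos n).le
  exact_mod_cast Finset.card_le_card (Finset.monotone_filter_right _ (fun x _ => h x))

lemma cubePr_congr {n : ℕ} {P Q : (Fin n → Bool) → Prop} (h : ∀ x, P x ↔ Q x) :
    cubePr n P = cubePr n Q :=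
  le_antisymm (cubePr_mono fun x => (h x).mp) (cubePr_mono fun x => (h x).mpr)

lemma cubePr_le_one (n : ℕ) (P : (Fin n → Bool) → Prop) : cubePr n P ≤ 1 := by
  unfold cubePr
  rw [div_le_one (two_pow_pos n)]
  calc ((univ.filter P).card : ℝ) ≤ ((univ : Finset (Fin n → Bool)).card : ℝ) := by
        exact_mod_cast Finset.card_le_card (Finset.filter_subset _ _)
    _ = 2 ^ n := card_cube n

lemma lin_update_false {n : ℕ} (a : Fin n → ℝ) (x : Fin n → Bool) (i : Fin n)
    (hx : x i = true) : lin n a (Function.update x i false) = lin n a x - 2 * a i := by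
  unfold lin
  have : ∀ j, a j * sgn1 (Function.update x i false j)
      = a j * sgn1 (x j) - (if j = i then 2 * a i else 0) := by
    intro j
    by_cases hj : j = i
    · subst hj; simp [Function.update_self, hx, sgn1]; ring
    · simp [Function.update_of_ne hj, hj]
  rw [Finset.sum_congr rfl (fun j _ => this j), Finset.sum_sub_distrib]
  simp

lemma pair_sum {n : ℕ} (i : Fin n) (F : (Fin n → Bool) → ℝ) :
    ∑ x, sgn1 (x i) * F x
      = ∑ x ∈ univ.filter (fun x => x i = true), (F x - F (Function.update x i false)) := by
  rw [← Finset.sum_filter_add_sum_filter_not univ (fun x => x i = true)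
    (fun x => sgn1 (x i) * F x)]
  have h1 : ∑ x ∈ univ.filter (fun x => x i = true), sgn1 (x i) * F x
      = ∑ x ∈ univ.filter (fun x => x i = true), F x := by
    apply Finset.sum_congr rfl; intro x hx
    simp only [Finset.mem_filter] at hx
    rw [hx.2, sgn1_true, one_mul]
  have h2 : ∑ x ∈ univ.filter (fun x => ¬ x i = true), sgn1 (x i) * F x
      = ∑ x ∈ univ.filter (fun x => x i = true), (- F (Function.update x i false)) := by
    apply Finset.sum_nbij' (fun x => Function.update x i true) (fun x => Function.update x i false)
    · intro x hx
      simp only [Finset.mem_filter, Bool.not_eq_true] at hx ⊢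
      exact ⟨Finset.mem_univ _, Function.update_self i true x⟩
    · intro x hx
      simp only [Finset.mem_filter, Bool.not_eq_true] at hx ⊢
      exact ⟨Finset.mem_univ _, Function.update_self i false x⟩
    · intro x hx
      simp only [Finset.mem_filter, Bool.not_eq_true] at hx
      funext j
      by_cases hj : j = i
      · subst hj; simp [hx.2]
      · simp [Function.update_of_ne hj]
    · intro x hx
      simp only [Finset.mem_filter] at hx
      funext j
      by_cases hj : j = i
      · subst hj; simp [hx.2]
      · simp [Function.update_of_ne hj]
    · intro x hx
      simp only [Finset.mem_filter, Bool.not_eq_true] at hx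
      have hxi : x i = false := hx.2
      have : Function.update (Function.update x i true) i false = x := by
        funext j
        by_cases hj : j = i
        · subst hj; simp [hxi]
        · simp [Function.update_of_ne hj]
      rw [hxi, this, sgn1_false]
      ring
  rw [h1, h2, ← Finset.sum_add_distrib]
  apply Finset.sum_congr rfl; intro x _; ring


lemma orth {n : ℕ} (i j : Fin n) (hij : i ≠ j) :
    ∑ x : Fin n → Bool, sgn1 (x i) * sgn1 (x j) = 0 := by
  rw [pair_sum i (fun x => sgn1 (x j))]
  apply Finset.sum_eq_zero
  intro x _
  rw [Function.update_of_ne (fun h => hij h.symm ) ]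
  ring

lemma sum_lin_sq {n : ℕ} (a : Fin n → ℝ) :
    ∑ x : Fin n → Bool, (lin n a x) ^ 2 = 2 ^ n * ∑ i, (a i) ^ 2 := by
  have expand : ∀ x : Fin n → Bool, (lin n a x) ^ 2
      = ∑ i, ∑ j, (a i * a j) * (sgn1 (x i) * sgn1 (x j)) := by
    intro x
    rw [sq]
    unfold lin
    rw [Finset.sum_mul_sum]
    apply Finset.sum_congr rfl; intro i _
    apply Finset.sum_congr rfl; intro j _
    ring
  rw [Finset.sum_congr rfl (fun x _ => expand x)]
  rw [Finset.sum_comm]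
  have inner : ∀ i : Fin n, ∑ x : Fin n → Bool, ∑ j, (a i * a j) * (sgn1 (x i) * sgn1 (x j))
      = 2 ^ n * (a i) ^ 2 := by
    intro i
    rw [Finset.sum_comm]
    have swap : ∀ j : Fin n, ∑ x : Fin n → Bool, (a i * a j) * (sgn1 (x i) * sgn1 (x j))
        = (a i * a j) * ∑ x : Fin n → Bool, (sgn1 (x i) * sgn1 (x j)) := by
      intro j; rw [Finset.mul_sum]
    rw [Finset.sum_congr rfl (fun j _ => swap j)]
    rw [Finset.sum_eq_single i]
    · have : ∀ x : Fin n → Bool, sgn1 (x i) * sgn1 (x i) = 1 := by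
        intro x; have := sgn1_sq (x i); nlinarith [sgn1_sq (x i)]
      rw [Finset.sum_congr rfl (fun x _ => this x)]
      rw [Finset.sum_const]
      rw [Finset.card_univ]
      simp [Fintype.card_fun]
      ring
    · intro j _ hji
      rw [orth i j (fun h => hji h.symm)]
      ring
    · intro h; exact absurd (Finset.mem_univ i) h
  rw [Finset.sum_congr rfl (fun i _ => inner i), ← Finset.mul_sum]

/-- swap inner: need `∑ j, ∑ x` but we had `∑ x, ∑ j`... checked by sum_comm above -/

lemma chebyshev {n : ℕ} (a : Fin n → ℝ) {v : ℝ} (hv : 0 < v) :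
    cubePr n (fun x => v < lin n a x) ≤ (∑ i, (a i) ^ 2) / v ^ 2 := by
  have key : v ^ 2 * ((univ.filter (fun x => v < lin n a x)).card : ℝ)
      ≤ 2 ^ n * ∑ i, (a i) ^ 2 := by
    rw [← sum_lin_sq a]
    calc v ^ 2 * ((univ.filter (fun x => v < lin n a x)).card : ℝ)
        = ∑ _x ∈ univ.filter (fun x => v < lin n a x), v ^ 2 := by
          rw [Finset.sum_const, nsmul_eq_mul]; ring
      _ ≤ ∑ x ∈ univ.filter (fun x => v < lin n a x), (lin n a x) ^ 2 := by
          apply Finset.sum_le_sum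
          intro x hx
          simp only [Finset.mem_filter] at hx
          nlinarith [hx.2]
      _ ≤ ∑ x : Fin n → Bool, (lin n a x) ^ 2 := by
          apply Finset.sum_le_sum_of_subset_of_nonneg (Finset.filter_subset _ _)
          intro x _ _; positivity
  unfold cubePr
  rw [div_le_div_iff₀ (two_pow_pos n) (by positivity)]
  nlinarith [key]

lemma lin_neg {n : ℕ} (a : Fin n → ℝ) (x : Fin n → Bool) :
    lin n a (fun j => !(x j)) = - lin n a x := by
  unfold lin
  rw [← Finset.sum_neg_distrib]
  apply Finset.sum_congr rfl; intro j _
  rw [sgn1_not]; ring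

lemma card_flip {n : ℕ} (P Q : (Fin n → Bool) → Prop)
    (h : ∀ x, P x ↔ Q (fun j => !(x j))) :
    (univ.filter P).card = (univ.filter Q).card := by
  apply Finset.card_nbij' (fun x => fun j => !(x j)) (fun x => fun j => !(x j))
  · intro x hx
    simp only [Finset.mem_coe, Finset.mem_filter] at hx ⊢
    exact ⟨Finset.mem_univ _, (h x).mp hx.2⟩
  · intro x hx
    simp only [Finset.mem_coe, Finset.mem_filter] at hx ⊢
    refine ⟨Finset.mem_univ _, ?_⟩
    apply (h _).mpr
    simpa using hx.2
  · intro x _; funext j; simp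
  · intro x _; funext j; simp

lemma tail_le_half {n : ℕ} (a : Fin n → ℝ) {t : ℝ} (ht : 0 ≤ t) :
    cubePr n (fun x => t < lin n a x) ≤ 1 / 2 := by
  set A := univ.filter (fun x => t < lin n a x) with hA
  set A' := univ.filter (fun x => lin n a x < -t) with hA'
  have hcard : A.card = A'.card := by
    apply card_flip
    intro x
    rw [lin_neg]
    constructor <;> intro h <;> linarith
  have hdisj : Disjoint A A' := by
    rw [Finset.disjoint_left]
    intro x hx hx'
    rw [hA, Finset.mem_filter] at hx
    rw [hA', Finset.mem_filter] at hx'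
    linarith [hx.2, hx'.2]
  have hunion : (A ∪ A').card ≤ 2 ^ n := by
    calc ((A ∪ A').card : ℕ) ≤ (univ : Finset (Fin n → Bool)).card :=
          Finset.card_le_card (Finset.subset_univ _)
      _ = 2 ^ n := by exact_mod_cast card_cube n
  have h2 : (2 : ℕ) * A.card ≤ 2 ^ n := by
    rw [Finset.card_union_of_disjoint hdisj] at hunion
    omega
  unfold cubePr
  rw [div_le_div_iff₀ (two_pow_pos n) (by norm_num)]
  have : ((2:ℝ) * A.card) ≤ 2 ^ n := by exact_mod_cast h2
  linarith


lemma half_le_tail {n : ℕ} (a : Fin n → ℝ) {u : ℝ} (hu : u < 0) :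
    1 / 2 ≤ cubePr n (fun x => u < lin n a x) := by
  set A := univ.filter (fun x => u < lin n a x) with hA
  set N := univ.filter (fun x : Fin n → Bool => lin n a x < 0) with hN
  set P := univ.filter (fun x : Fin n → Bool => 0 < lin n a x) with hP
  have hcard : N.card = P.card := by
    apply card_flip
    intro x
    rw [lin_neg]
    constructor <;> intro h <;> linarith
  have hPA : P ⊆ A := by
    intro x hx
    rw [hP, Finset.mem_filter] at hx
    rw [hA, Finset.mem_filter]
    exact ⟨Finset.mem_univ _, by linarith [hx.2]⟩
  have hcompl : ((univ : Finset (Fin n → Bool)) \ A) ⊆ N := by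
    intro x hx
    rw [Finset.mem_sdiff, hA, Finset.mem_filter] at hx
    rw [hN, Finset.mem_filter]
    refine ⟨Finset.mem_univ _, ?_⟩
    have : ¬ (u < lin n a x) := fun h => hx.2 ⟨Finset.mem_univ _, h⟩
    push_neg at this
    linarith
  have h1 : (univ : Finset (Fin n → Bool)).card ≤ 2 * A.card := by
    have e1 : (univ : Finset (Fin n → Bool)).card = ((univ : Finset (Fin n → Bool)) \ A).card + A.card := by
      rw [Finset.card_sdiff_add_card_eq_card (Finset.subset_univ A)]
    have e2 : ((univ : Finset (Fin n → Bool)) \ A).card ≤ N.card := Finset.card_le_card hcompl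
    have e3 : P.card ≤ A.card := Finset.card_le_card hPA
    omega
  unfold cubePr
  rw [div_le_div_iff₀ (by norm_num) (two_pow_pos n)]
  have h1' : ((univ : Finset (Fin n → Bool)).card : ℝ) ≤ 2 * A.card := by exact_mod_cast h1
  rw [card_cube n] at h1'
  linarith

lemma lin_insertNth {n : ℕ} (a : Fin (n+1) → ℝ) (i : Fin (n+1)) (b : Bool) (y : Fin n → Bool) :
    lin (n+1) a (i.insertNth b y) = a i * sgn1 b + lin n (fun j => a (i.succAbove j)) y := by
  unfold lin
  have h := Fin.sum_univ_succAbove (fun j => a j * sgn1 (i.insertNth (α := fun _ => Bool) b y j)) i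
  rw [h, Fin.insertNth_apply_same]
  congr 1
  apply Finset.sum_congr rfl
  intro j _
  rw [Fin.insertNth_apply_succAbove]

lemma cubePr_split {n : ℕ} (i : Fin (n+1)) (P : Bool → (Fin n → Bool) → Prop) :
    cubePr (n+1) (fun x => P (x i) (fun j => x (i.succAbove j)))
      = (cubePr n (P true) + cubePr n (P false)) / 2 := by
  have cards : ((univ.filter (fun x : Fin (n+1) → Bool => P (x i) (fun j => x (i.succAbove j)))).card : ℝ)
      = ((univ.filter (P true)).card : ℝ) + ((univ.filter (P false)).card : ℝ) := by
    have key : ∑ x : Fin (n+1) → Bool,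
        (if P (x i) (fun j => x (i.succAbove j)) then (1:ℝ) else 0)
        = ∑ p : Bool × (Fin n → Bool), (if P p.1 p.2 then (1:ℝ) else 0) := by
      rw [← Equiv.sum_comp (Fin.insertNthEquiv (fun _ : Fin (n+1) => Bool) i)
        (fun x : Fin (n+1) → Bool =>
        (if P (x i) (fun j => x (i.succAbove j)) then (1:ℝ) else 0))]
      apply Finset.sum_congr rfl
      intro p _
      have hp1 : (Fin.insertNthEquiv (fun _ : Fin (n+1) => Bool) i) p i = p.1 := by
        rw [Fin.insertNthEquiv_apply, Fin.insertNth_apply_same]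
      have hp2 : (fun j => (Fin.insertNthEquiv (fun _ : Fin (n+1) => Bool) i) p (i.succAbove j)) = p.2 := by
        funext j
        rw [Fin.insertNthEquiv_apply, Fin.insertNth_apply_succAbove]
      rw [hp1, hp2]
    have lhs : ((univ.filter (fun x : Fin (n+1) → Bool => P (x i) (fun j => x (i.succAbove j)))).card : ℝ)
        = ∑ x : Fin (n+1) → Bool, (if P (x i) (fun j => x (i.succAbove j)) then (1:ℝ) else 0) := by
      rw [Finset.card_filter]
      push_cast
      rfl
    have rhs : ∑ p : Bool × (Fin n → Bool), (if P p.1 p.2 then (1:ℝ) else 0)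
        = ((univ.filter (P true)).card : ℝ) + ((univ.filter (P false)).card : ℝ) := by
      rw [Fintype.sum_prod_type, Fintype.sum_bool]
      congr 1 <;> (rw [Finset.card_filter]; push_cast; rfl)
    rw [lhs, key, rhs]
  unfold cubePr
  rw [cards]
  have : (2:ℝ) ^ (n+1) = 2 ^ n * 2 := by ring
  rw [this]
  field_simp

lemma tail_split {n : ℕ} (a : Fin (n+1) → ℝ) (i : Fin (n+1)) (u : ℝ) :
    cubePr (n+1) (fun x => u < lin (n+1) a x)
      = (cubePr n (fun y => u - a i < lin n (fun j => a (i.succAbove j)) y)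
        + cubePr n (fun y => u + a i < lin n (fun j => a (i.succAbove j)) y)) / 2 := by
  have congr1 : cubePr (n+1) (fun x => u < lin (n+1) a x)
      = cubePr (n+1) (fun x => (fun b y => u - a i * sgn1 b < lin n (fun j => a (i.succAbove j)) y)
          (x i) (fun j => x (i.succAbove j))) := by
    apply cubePr_congr
    intro x
    have hx : x = i.insertNth (x i) (fun j => x (i.succAbove j)) := by
      have h2 := (Fin.insertNthEquiv (fun _ : Fin (n+1) => Bool) i).apply_symm_apply x
      symm
      exact h2
    constructor
    · intro h
      rw [hx, lin_insertNth] at h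
      linarith
    · intro h
      rw [hx, lin_insertNth]
      linarith
  rw [congr1, cubePr_split i (fun b y => u - a i * sgn1 b < lin n (fun j => a (i.succAbove j)) y)]
  rw [sgn1_true, sgn1_false]
  norm_num


lemma lin_div {n : ℕ} (a : Fin n → ℝ) (c : ℝ) (y : Fin n → Bool) :
    lin n (fun j => a j / c) y = lin n a y / c := by
  unfold lin
  rw [Finset.sum_div]
  apply Finset.sum_congr rfl; intro j _; ring

lemma tail_rescale {n : ℕ} (a : Fin n → ℝ) {c : ℝ} (hc : 0 < c) (u : ℝ) :
    cubePr n (fun y => u < lin n a y) = cubePr n (fun y => u / c < lin n (fun j => a j / c) y) := by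
  apply cubePr_congr
  intro y
  rw [lin_div]
  exact (div_lt_div_iff_of_pos_right hc).symm

lemma mgf {n : ℕ} (a : Fin n → ℝ) (c : ℝ) :
    ∑ x : Fin n → Bool, Real.exp (c * lin n a x) = 2 ^ n * ∏ i, Real.cosh (c * a i) := by
  have expand : ∀ x : Fin n → Bool, Real.exp (c * lin n a x)
      = ∏ i, Real.exp (c * a i * sgn1 (x i)) := by
    intro x
    unfold lin
    rw [Finset.mul_sum, Real.exp_sum]
    apply Finset.prod_congr rfl; intro i _; ring_nf
  rw [Finset.sum_congr rfl (fun x _ => expand x)]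
  have prodsum := Finset.prod_univ_sum (fun _ : Fin n => (univ : Finset Bool))
    (fun i b => Real.exp (c * a i * sgn1 b))
  rw [Fintype.piFinset_univ] at prodsum
  rw [← prodsum]
  have : ∀ i : Fin n, ∑ b : Bool, Real.exp (c * a i * sgn1 b) = 2 * Real.cosh (c * a i) := by
    intro i
    rw [Fintype.sum_bool, sgn1_true, sgn1_false, Real.cosh_eq]
    ring_nf
  rw [Finset.prod_congr rfl (fun i _ => this i)]
  rw [Finset.prod_mul_distrib]
  rw [Finset.prod_const]
  rw [Finset.card_univ, Fintype.card_fin]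

lemma exp_half_le {u : ℝ} (h0 : 0 ≤ u) (h1 : u ≤ 1) : Real.exp (u / 2) ≤ 1 + u := by
  have h2 : 1 - u / 2 ≤ Real.exp (-(u / 2)) := by
    have := Real.add_one_le_exp (-(u/2))
    linarith
  have h3 : Real.exp (u/2) * Real.exp (-(u/2)) = 1 := by
    rw [← Real.exp_add]; ring_nf; exact Real.exp_zero
  have h4 : Real.exp (u/2) * (1 - u/2) ≤ 1 := by
    calc Real.exp (u/2) * (1 - u/2) ≤ Real.exp (u/2) * Real.exp (-(u/2)) := by
          apply mul_le_mul_of_nonneg_left h2 (Real.exp_pos _).le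
      _ = 1 := h3
  nlinarith [Real.exp_pos (u/2)]

lemma cosh_lower {x : ℝ} (h0 : 0 ≤ x) (h1 : x ≤ 2) : Real.exp (x ^ 2 / 8) ≤ Real.cosh x := by
  have ha : (1 + x/2)^2 ≤ Real.exp x := by
    have := Real.add_one_le_exp (x/2)
    have hsq : Real.exp (x/2) ^ 2 = Real.exp x := by
      rw [← Real.exp_nat_mul]; congr 1; push_cast; ring
    nlinarith [Real.exp_pos (x/2)]
  have hb : (1 - x/2)^2 ≤ Real.exp (-x) := by
    have := Real.add_one_le_exp (-(x/2))
    have hsq : Real.exp (-(x/2)) ^ 2 = Real.exp (-x) := by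
      rw [← Real.exp_nat_mul]; congr 1; push_cast; ring
    nlinarith [Real.exp_pos (-(x/2))]
  have hcosh : 1 + x^2/4 ≤ Real.cosh x := by
    rw [Real.cosh_eq]
    nlinarith
  have : Real.exp (x^2/8) ≤ 1 + x^2/4 := by
    have := exp_half_le (u := x^2/4) (by positivity) (by nlinarith)
    calc Real.exp (x^2/8) = Real.exp ((x^2/4)/2) := by congr 1; ring
      _ ≤ 1 + x^2/4 := this
  linarith

lemma sinh_le_mul_cosh (y : ℝ) (hy : 0 ≤ y) : Real.sinh y ≤ y * Real.cosh y := by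
  have hdiff : ∀ z : ℝ, HasDerivAt (fun w => w * Real.cosh w - Real.sinh w)
      (z * Real.sinh z) z := by
    intro z
    have h1 : HasDerivAt (fun w : ℝ => w * Real.cosh w) (1 * Real.cosh z + z * Real.sinh z) z :=
      (hasDerivAt_id z).mul (Real.hasDerivAt_cosh z)
    have h2 := (h1.sub (Real.hasDerivAt_sinh z))
    exact h2.congr_deriv (by ring)
  have hmono : Monotone (fun w => w * Real.cosh w - Real.sinh w) := by
    apply monotone_of_deriv_nonneg
    · intro z
      exact ((hdiff z).differentiableAt)
    · intro z
      rw [(hdiff z).deriv]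
      rcases le_total 0 z with h | h
      · exact mul_nonneg h (by simpa using Real.sinh_strictMono.monotone h)
      · have : Real.sinh z ≤ 0 := by simpa using Real.sinh_strictMono.monotone h
        nlinarith [h, this]
  have := hmono hy
  simp only [Real.sinh_zero, Real.cosh_zero] at this
  nlinarith [this]

lemma cosh_double_le (y : ℝ) : Real.cosh (2 * y) ≤ Real.cosh y ^ 2 * Real.exp (y ^ 2) := by
  wlog hy : 0 ≤ y with H
  · push_neg at hy
    have := H (-y) (by linarith)
    calc Real.cosh (2 * y) = Real.cosh (2 * (-y)) := by
          rw [show (2:ℝ) * y = -(2 * (-y)) by ring, Real.cosh_neg]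
      _ ≤ Real.cosh (-y) ^ 2 * Real.exp ((-y) ^ 2) := this
      _ = Real.cosh y ^ 2 * Real.exp (y ^ 2) := by rw [Real.cosh_neg]; ring_nf
  have hc := Real.cosh_pos y
  have hsinh : Real.sinh y ^ 2 ≤ y ^ 2 * Real.cosh y ^ 2 := by
    have h1 := sinh_le_mul_cosh y hy
    have h2 : 0 ≤ Real.sinh y := by simpa using Real.sinh_strictMono.monotone hy
    nlinarith
  have hexp : 1 + y ^ 2 ≤ Real.exp (y ^ 2) := by
    have := Real.add_one_le_exp (y^2); linarith
  have h2m : Real.cosh (2*y) = Real.cosh y ^ 2 + Real.sinh y ^ 2 := Real.cosh_two_mul y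
  calc Real.cosh (2*y) = Real.cosh y ^ 2 + Real.sinh y ^ 2 := h2m
    _ ≤ Real.cosh y ^ 2 + y ^ 2 * Real.cosh y ^ 2 := by linarith
    _ = Real.cosh y ^ 2 * (1 + y ^ 2) := by ring
    _ ≤ Real.cosh y ^ 2 * Real.exp (y ^ 2) := by nlinarith


set_option maxHeartbeats 1000000 in
lemma lemmaG {n : ℕ} (a : Fin n → ℝ) {l t : ℝ} (hl : 0 < l)
    (hla : ∀ i, l * a i ≤ 1) (ha : ∀ i, 0 ≤ a i) (hsum : ∑ i, (a i)^2 = 1)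
    (hgap : t < l / 8 - Real.log 2 / l) :
    Real.exp (-(l ^ 2)) / 4 ≤ cubePr n (fun x => t < lin n a x) := by
  set M1 := ∏ i, Real.cosh (l * a i) with hM1
  set M2 := ∏ i, Real.cosh (2 * (l * a i)) with hM2
  have hM1pos : 0 < M1 := Finset.prod_pos (fun i _ => Real.cosh_pos _)
  have hM2pos : 0 < M2 := Finset.prod_pos (fun i _ => Real.cosh_pos _)
  have hsum' : ∑ i, (l * a i) ^ 2 = l ^ 2 := by
    calc ∑ i, (l * a i) ^ 2 = ∑ i, l ^ 2 * (a i) ^ 2 := by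
          apply Finset.sum_congr rfl; intro i _; ring
      _ = l ^ 2 * ∑ i, (a i) ^ 2 := by rw [Finset.mul_sum]
      _ = l ^ 2 := by rw [hsum]; ring
  have f1 : Real.exp (l ^ 2 / 8) ≤ M1 := by
    have : Real.exp (l ^ 2 / 8) = ∏ i, Real.exp ((l * a i) ^ 2 / 8) := by
      rw [← Real.exp_sum]
      congr 1
      rw [← Finset.sum_div, hsum']
    rw [this]
    apply Finset.prod_le_prod
    · intro i _; positivity
    · intro i _
      exact cosh_lower (mul_nonneg hl.le (ha i)) (le_trans (hla i) one_le_two)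
  have f2 : M2 ≤ M1 ^ 2 * Real.exp (l ^ 2) := by
    have : M1 ^ 2 * Real.exp (l ^ 2) = ∏ i, (Real.cosh (l * a i) ^ 2 * Real.exp ((l * a i) ^ 2)) := by
      rw [Finset.prod_mul_distrib, ← Finset.prod_pow, ← Real.exp_sum, hsum']
    rw [this]
    apply Finset.prod_le_prod
    · intro i _; positivity
    · intro i _
      exact cosh_double_le (l * a i)
  have SZ : ∑ x : Fin n → Bool, Real.exp (l * lin n a x) = 2 ^ n * M1 := mgf a l
  have SZ2 : ∑ x : Fin n → Bool, (Real.exp (l * lin n a x)) ^ 2 = 2 ^ n * M2 := by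
    have : ∀ x : Fin n → Bool, (Real.exp (l * lin n a x)) ^ 2 = Real.exp ((2 * l) * lin n a x) := by
      intro x
      rw [← Real.exp_nat_mul]
      congr 1; push_cast; ring
    rw [Finset.sum_congr rfl (fun x _ => this x), mgf a (2 * l)]
    congr 1
    apply Finset.prod_congr rfl; intro i _
    congr 1; ring
  set E := univ.filter (fun x : Fin n → Bool => M1 / 2 ≤ Real.exp (l * lin n a x)) with hE
  have hlow : 2 ^ n * (M1 / 2) ≤ ∑ x ∈ E, Real.exp (l * lin n a x) := by
    have hsplit : ∑ x : Fin n → Bool, Real.exp (l * lin n a x)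
        = ∑ x ∈ E, Real.exp (l * lin n a x)
          + ∑ x ∈ univ.filter (fun x : Fin n → Bool => ¬ (M1 / 2 ≤ Real.exp (l * lin n a x))), Real.exp (l * lin n a x) := by
      rw [hE]
      exact (Finset.sum_filter_add_sum_filter_not univ _ _).symm
    have hsmall : ∑ x ∈ univ.filter (fun x : Fin n → Bool => ¬ (M1 / 2 ≤ Real.exp (l * lin n a x))), Real.exp (l * lin n a x)
        ≤ 2 ^ n * (M1 / 2) := by
      calc ∑ x ∈ univ.filter (fun x : Fin n → Bool => ¬ (M1 / 2 ≤ Real.exp (l * lin n a x))), Real.exp (l * lin n a x)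
          ≤ ∑ _x ∈ univ.filter (fun x : Fin n → Bool => ¬ (M1 / 2 ≤ Real.exp (l * lin n a x))), (M1 / 2) := by
            apply Finset.sum_le_sum
            intro x hx
            simp only [Finset.mem_filter] at hx
            push_neg at hx
            exact hx.2.le
        _ = ((univ.filter (fun x : Fin n → Bool => ¬ (M1 / 2 ≤ Real.exp (l * lin n a x)))).card : ℝ) * (M1 / 2) := by
            rw [Finset.sum_const, nsmul_eq_mul]
        _ ≤ 2 ^ n * (M1 / 2) := by
            apply mul_le_mul_of_nonneg_right _ (by positivity)
            calc ((univ.filter (fun x : Fin n → Bool => ¬ (M1 / 2 ≤ Real.exp (l * lin n a x)))).card : ℝ)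
                ≤ ((univ : Finset (Fin n → Bool)).card : ℝ) := by
                  exact_mod_cast Finset.card_le_card (Finset.filter_subset _ _)
              _ = 2 ^ n := card_cube n
    have := SZ
    linarith
  have hCS : (∑ x ∈ E, Real.exp (l * lin n a x)) ^ 2 ≤ (E.card : ℝ) * (2 ^ n * M2) := by
    have cs := Finset.sum_mul_sq_le_sq_mul_sq E (fun _ => (1:ℝ)) (fun x => Real.exp (l * lin n a x))
    simp only [one_mul, one_pow] at cs
    have h1 : ∑ _x ∈ E, (1:ℝ) = (E.card : ℝ) := by rw [Finset.sum_const, nsmul_eq_mul]; ring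
    have h2 : ∑ x ∈ E, (Real.exp (l * lin n a x)) ^ 2 ≤ 2 ^ n * M2 := by
      rw [← SZ2]
      apply Finset.sum_le_sum_of_subset_of_nonneg (Finset.filter_subset _ _)
      intro x _ _; positivity
    calc (∑ x ∈ E, Real.exp (l * lin n a x)) ^ 2
        ≤ (∑ _x ∈ E, (1:ℝ)) * ∑ x ∈ E, (Real.exp (l * lin n a x)) ^ 2 := cs
      _ ≤ (E.card : ℝ) * (2 ^ n * M2) := by
          rw [h1]
          apply mul_le_mul_of_nonneg_left h2 (by positivity)
  have hcard : Real.exp (-(l ^ 2)) / 4 * 2 ^ n ≤ (E.card : ℝ) := by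
    have h1 : (2 ^ n * (M1 / 2)) ^ 2 ≤ (E.card : ℝ) * (2 ^ n * M2) := by
      calc (2 ^ n * (M1 / 2)) ^ 2 ≤ (∑ x ∈ E, Real.exp (l * lin n a x)) ^ 2 := by
            have h0 : (0:ℝ) ≤ 2 ^ n * (M1 / 2) := by positivity
            nlinarith [hlow]
        _ ≤ (E.card : ℝ) * (2 ^ n * M2) := hCS
    have hEpos : (0:ℝ) < Real.exp (l ^ 2) := Real.exp_pos _
    have hc0 : (0:ℝ) ≤ (E.card : ℝ) := Nat.cast_nonneg _
    have step : (E.card : ℝ) * (2 ^ n * M2) ≤ (E.card : ℝ) * (2 ^ n * (M1 ^ 2 * Real.exp (l ^ 2))) := by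
      apply mul_le_mul_of_nonneg_left _ hc0
      exact mul_le_mul_of_nonneg_left f2 (two_pow_pos n).le
    have chain := h1.trans step
    have key : (2:ℝ) ^ n * M1 ^ 2 / 4 ≤ (E.card : ℝ) * M1 ^ 2 * Real.exp (l ^ 2) := by
      have := two_pow_pos n
      refine le_of_mul_le_mul_left ?_ this
      nlinarith [chain]
    have key2 : (2:ℝ) ^ n / 4 ≤ (E.card : ℝ) * Real.exp (l ^ 2) := by
      have hM1sq : (0:ℝ) < M1 ^ 2 := by positivity
      refine le_of_mul_le_mul_left ?_ hM1sq
      nlinarith [key]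
    calc Real.exp (-(l ^ 2)) / 4 * 2 ^ n = ((2:ℝ) ^ n / 4) * (Real.exp (l ^ 2))⁻¹ := by
          rw [Real.exp_neg]; ring
      _ ≤ ((E.card : ℝ) * Real.exp (l ^ 2)) * (Real.exp (l ^ 2))⁻¹ := by
          apply mul_le_mul_of_nonneg_right key2 (by positivity)
      _ = (E.card : ℝ) := by field_simp
  have hincl : E ⊆ univ.filter (fun x => t < lin n a x) := by
    intro x hx
    rw [hE, Finset.mem_filter] at hx
    rw [Finset.mem_filter]
    refine ⟨Finset.mem_univ _, ?_⟩
    have hlog : Real.log (M1 / 2) ≤ l * lin n a x := by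
      calc Real.log (M1 / 2) ≤ Real.log (Real.exp (l * lin n a x)) :=
            Real.log_le_log (by positivity) hx.2
        _ = l * lin n a x := Real.log_exp _
    have hlogM1 : l ^ 2 / 8 ≤ Real.log M1 := by
      calc l ^ 2 / 8 = Real.log (Real.exp (l ^ 2 / 8)) := (Real.log_exp _).symm
        _ ≤ Real.log M1 := Real.log_le_log (Real.exp_pos _) f1
    have hsplit : Real.log (M1 / 2) = Real.log M1 - Real.log 2 := by
      rw [Real.log_div (ne_of_gt hM1pos) (by norm_num)]
    have h8 : l ^ 2 / 8 - Real.log 2 ≤ l * lin n a x := by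
      rw [hsplit] at hlog; linarith
    have : l * t < l * lin n a x := by
      have ht' : l * t < l ^ 2 / 8 - Real.log 2 := by
        have := mul_lt_mul_of_pos_left hgap hl
        calc l * t < l * (l / 8 - Real.log 2 / l) := this
          _ = l ^ 2 / 8 - Real.log 2 := by field_simp
      linarith
    exact lt_of_mul_lt_mul_left this hl.le
  calc Real.exp (-(l ^ 2)) / 4 = (Real.exp (-(l ^ 2)) / 4 * 2 ^ n) / 2 ^ n :=
        (mul_div_cancel_right₀ _ (ne_of_gt (two_pow_pos n))).symm
    _ ≤ ((E.card : ℝ)) / 2 ^ n := by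
        apply div_le_div_of_nonneg_right hcard (two_pow_pos n).le
    _ ≤ cubePr n (fun x => t < lin n a x) := by
        unfold cubePr
        apply div_le_div_of_nonneg_right _ (two_pow_pos n).le
        exact_mod_cast Finset.card_le_card hincl


set_option maxHeartbeats 1000000 in
lemma caseIIa {n : ℕ} (a : Fin n → ℝ) {t δ : ℝ} (ha : ∀ i, 0 ≤ a i)
    (hsum : ∑ i, (a i) ^ 2 = 1) (ht : 0 ≤ t) (hδ : 0 < δ)
    (hreg : ∀ i, a i ≤ δ / 4) (hbig : 8 ≤ (t + δ) * δ) :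
    cubePr n (fun x => t + δ < lin n a x) ≤ cubePr n (fun x => t < lin n a x) / 2 := by
  set ψ : ℝ → ℝ := fun s => min (δ / 4) (max 0 (s - (t + δ / 4))) with hψdef
  have hψ0 : ∀ s, 0 ≤ ψ s := by
    intro s; rw [hψdef]; simp only [le_min_iff, le_max_iff]
    constructor
    · linarith
    · left; rfl
  have hψzero : ∀ s, s ≤ t + δ / 4 → ψ s = 0 := by
    intro s hs; rw [hψdef]
    simp only
    rw [max_eq_left (by linarith), min_eq_right (by linarith)]
  have hψfull : ∀ s, t + δ / 2 ≤ s → ψ s = δ / 4 := by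
    intro s hs; rw [hψdef]
    simp only
    rw [max_eq_right (by linarith), min_eq_left (by linarith)]
  have hψlip : ∀ s s', s' ≤ s → ψ s - ψ s' ≤ s - s' := by
    intro s s' h; rw [hψdef]
    simp only [min_def, max_def]
    split_ifs <;> linarith
  set B := univ.filter (fun x : Fin n → Bool => t + δ < lin n a x) with hB
  set W := univ.filter (fun x : Fin n → Bool => t < lin n a x ∧ lin n a x ≤ t + δ) with hW
  set A := univ.filter (fun x : Fin n → Bool => t < lin n a x) with hA
  have term_nonneg : ∀ x : Fin n → Bool, 0 ≤ lin n a x * ψ (lin n a x) := by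
    intro x
    rcases le_or_gt (lin n a x) (t + δ / 4) with h | h
    · rw [hψzero _ h]; ring_nf; rfl
    · exact mul_nonneg (by linarith) (hψ0 _)
  have step1 : (t + δ) * (δ / 4) * (B.card : ℝ) ≤ ∑ x : Fin n → Bool, lin n a x * ψ (lin n a x) := by
    calc (t + δ) * (δ / 4) * (B.card : ℝ) = ∑ _x ∈ B, (t + δ) * (δ / 4) := by
          rw [Finset.sum_const, nsmul_eq_mul]; ring
      _ ≤ ∑ x ∈ B, lin n a x * ψ (lin n a x) := by
          apply Finset.sum_le_sum
          intro x hx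
          rw [hB, Finset.mem_filter] at hx
          have hfull : ψ (lin n a x) = δ / 4 := hψfull _ (by linarith [hx.2])
          rw [hfull]
          have : t + δ ≤ lin n a x := (hx.2).le
          nlinarith
      _ ≤ ∑ x : Fin n → Bool, lin n a x * ψ (lin n a x) := by
          apply Finset.sum_le_sum_of_subset_of_nonneg (Finset.subset_univ _)
          intro x _ _; exact term_nonneg x
  have step2 : ∑ x : Fin n → Bool, lin n a x * ψ (lin n a x)
      = ∑ i, a i * (∑ x : Fin n → Bool, sgn1 (x i) * ψ (lin n a x)) := by
    have expand : ∀ x : Fin n → Bool, lin n a x * ψ (lin n a x)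
        = ∑ i, a i * (sgn1 (x i) * ψ (lin n a x)) := by
      intro x
      unfold lin
      rw [Finset.sum_mul]
      apply Finset.sum_congr rfl; intro i _; ring
    rw [Finset.sum_congr rfl (fun x _ => expand x), Finset.sum_comm]
    apply Finset.sum_congr rfl; intro i _
    rw [Finset.mul_sum]
  have step3 : ∀ i, ∑ x : Fin n → Bool, sgn1 (x i) * ψ (lin n a x) ≤ 2 * a i * (W.card : ℝ) := by
    intro i
    rw [pair_sum i (fun x => ψ (lin n a x))]
    have bound : ∀ x ∈ univ.filter (fun x : Fin n → Bool => x i = true),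
        ψ (lin n a x) - ψ (lin n a (Function.update x i false))
          ≤ (if t < lin n a x ∧ lin n a x ≤ t + δ then 2 * a i else 0) := by
      intro x hx
      rw [Finset.mem_filter] at hx
      rw [lin_update_false a x i hx.2]
      set s := lin n a x with hs
      have hai := ha i
      have hai4 := hreg i
      rcases le_or_gt s (t + δ / 4) with h1 | h1
      · have z1 : ψ s = 0 := hψzero _ h1
        have z2 : 0 ≤ ψ (s - 2 * a i) := hψ0 _
        have : ψ s - ψ (s - 2 * a i) ≤ 0 := by linarith
        split_ifs <;> linarith
      · rcases le_or_gt s (t + δ) with h2 | h2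
        · have hcond : t < s ∧ s ≤ t + δ := ⟨by linarith, h2⟩
          rw [if_pos hcond]
          have := hψlip s (s - 2 * a i) (by linarith)
          linarith
        · have z1 : ψ s = δ / 4 := hψfull _ (by linarith)
          have z2 : ψ (s - 2 * a i) = δ / 4 := hψfull _ (by linarith)
          split_ifs <;> linarith
    calc ∑ x ∈ univ.filter (fun x : Fin n → Bool => x i = true),
          (ψ (lin n a x) - ψ (lin n a (Function.update x i false)))
        ≤ ∑ x ∈ univ.filter (fun x : Fin n → Bool => x i = true),
            (if t < lin n a x ∧ lin n a x ≤ t + δ then 2 * a i else 0) :=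
          Finset.sum_le_sum bound
      _ = ∑ x ∈ (univ.filter (fun x : Fin n → Bool => x i = true)).filter
            (fun x => t < lin n a x ∧ lin n a x ≤ t + δ), 2 * a i :=
          (Finset.sum_filter _ _).symm
      _ = (((univ.filter (fun x : Fin n → Bool => x i = true)).filter
            (fun x => t < lin n a x ∧ lin n a x ≤ t + δ)).card : ℝ) * (2 * a i) := by
          rw [Finset.sum_const, nsmul_eq_mul]
      _ ≤ (W.card : ℝ) * (2 * a i) := by
          apply mul_le_mul_of_nonneg_right _ (by linarith [ha i])
          have hsub : (univ.filter (fun x : Fin n → Bool => x i = true)).filter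
              (fun x => t < lin n a x ∧ lin n a x ≤ t + δ) ⊆ W := by
            intro x hx
            rw [Finset.mem_filter] at hx
            rw [hW, Finset.mem_filter]
            exact ⟨Finset.mem_univ _, hx.2⟩
          exact_mod_cast Finset.card_le_card hsub
      _ = 2 * a i * (W.card : ℝ) := by ring
  have step4 : (t + δ) * (δ / 4) * (B.card : ℝ) ≤ 2 * (W.card : ℝ) := by
    calc (t + δ) * (δ / 4) * (B.card : ℝ)
        ≤ ∑ x : Fin n → Bool, lin n a x * ψ (lin n a x) := step1
      _ = ∑ i, a i * (∑ x : Fin n → Bool, sgn1 (x i) * ψ (lin n a x)) := step2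
      _ ≤ ∑ i, a i * (2 * a i * (W.card : ℝ)) := by
          apply Finset.sum_le_sum
          intro i _
          exact mul_le_mul_of_nonneg_left (step3 i) (ha i)
      _ = 2 * (W.card : ℝ) * ∑ i, (a i) ^ 2 := by
          rw [Finset.mul_sum]
          apply Finset.sum_congr rfl; intro i _; ring
      _ = 2 * (W.card : ℝ) := by rw [hsum]; ring
  have step5 : (B.card : ℝ) ≤ (W.card : ℝ) := by
    have hBpos : (0:ℝ) ≤ (B.card : ℝ) := Nat.cast_nonneg _
    nlinarith [step4, hbig]
  have step6 : (A.card : ℝ) = (W.card : ℝ) + (B.card : ℝ) := by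
    have hsplit : A = W ∪ B := by
      rw [hA, hW, hB]
      rw [← Finset.filter_or]
      apply Finset.filter_congr
      intro x _
      constructor
      · intro h
        rcases le_or_gt (lin n a x) (t + δ) with h2 | h2
        · exact Or.inl ⟨h, h2⟩
        · exact Or.inr h2
      · intro h
        rcases h with ⟨h, _⟩ | h
        · exact h
        · linarith
    have hdisj : Disjoint W B := by
      rw [Finset.disjoint_left]
      intro x hx hx'
      rw [hW, Finset.mem_filter] at hx
      rw [hB, Finset.mem_filter] at hx'
      linarith [hx.2.2, hx'.2]
    rw [hsplit, Finset.card_union_of_disjoint hdisj]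
    push_cast; ring
  unfold cubePr
  rw [div_div]
  rw [div_le_div_iff₀ (two_pow_pos n) (by positivity)]
  have : ((univ.filter (fun x : Fin n → Bool => t + δ < lin n a x)).card : ℝ) = (B.card : ℝ) := by rw [hB]
  nlinarith [step5, step6, two_pow_pos n]


lemma cubePr_false {n : ℕ} {P : (Fin n → Bool) → Prop} (h : ∀ x, ¬ P x) :
    cubePr n P = 0 := by
  unfold cubePr
  rw [Finset.filter_false_of_mem (fun x _ => h x)]
  simp

lemma sqrt_le_of_le_sq {x y : ℝ} (hy : 0 ≤ y) (h : x ≤ y ^ 2) : Real.sqrt x ≤ y := by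
  calc Real.sqrt x ≤ Real.sqrt (y ^ 2) := Real.sqrt_le_sqrt h
    _ = y := Real.sqrt_sq hy

set_option maxHeartbeats 2000000 in
lemma mainInd : ∀ (n : ℕ) (a : Fin n → ℝ) (t ε : ℝ),
    (∀ i, 0 ≤ a i) → (∑ i, (a i) ^ 2) = 1 → 0 ≤ t →
    ε = cubePr n (fun x => t < lin n a x) → 0 < ε →
    cubePr n (fun x => t + 300 / Real.sqrt (Real.log (1 / ε)) < lin n a x) ≤ ε / 2 := by
  intro n
  induction n with
  | zero =>
    intro a t ε ha hsum ht hεdef hεpos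
    exfalso
    rw [Fin.sum_univ_zero] at hsum
    exact zero_ne_one hsum
  | succ n IH =>
    intro a t ε ha hsum ht hεdef hεpos
    have hεhalf : ε ≤ 1 / 2 := hεdef ▸ tail_le_half a ht
    set L := Real.log (1 / ε) with hLdef
    have hlog2pos : (0:ℝ) < Real.log 2 := Real.log_pos (by norm_num)
    have hL2 : Real.log 2 ≤ L := by
      rw [hLdef]
      apply Real.log_le_log (by norm_num)
      rw [le_div_iff₀ hεpos]
      linarith
    have hLpos : 0 < L := lt_of_lt_of_le hlog2pos hL2
    set s := Real.sqrt L with hsdef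
    have hspos : 0 < s := Real.sqrt_pos.mpr hLpos
    have hs2 : s ^ 2 = L := Real.sq_sqrt hLpos.le
    set δ := 300 / s with hδdef
    have hδpos : 0 < δ := by positivity
    by_cases hcase : ∃ i, Real.sqrt (Real.log 2) / s < a i
    · -- CASE I : some heavy coordinate
      obtain ⟨i, hai⟩ := hcase
      have hsqlogpos : 0 < Real.sqrt (Real.log 2) := Real.sqrt_pos.mpr hlog2pos
      have haipos : 0 < a i := lt_trans (by positivity) hai
      have hsum' : ∑ j, (a (i.succAbove j)) ^ 2 = 1 - (a i) ^ 2 := by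
        have h := Fin.sum_univ_succAbove (fun j => (a j) ^ 2) i
        rw [hsum] at h
        linarith
      have hai1 : a i ≤ 1 := by
        have h0 : 0 ≤ ∑ j, (a (i.succAbove j)) ^ 2 :=
          Finset.sum_nonneg (fun j _ => by positivity)
        nlinarith
      have hsplitε : ε = (cubePr n (fun y => t - a i < lin n (fun j => a (i.succAbove j)) y)
          + cubePr n (fun y => t + a i < lin n (fun j => a (i.succAbove j)) y)) / 2 := by
        rw [hεdef, tail_split a i t]
      have hsplitgoal : cubePr (n+1) (fun x => t + δ < lin (n+1) a x)
          = (cubePr n (fun y => (t + δ) - a i < lin n (fun j => a (i.succAbove j)) y)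
            + cubePr n (fun y => (t + δ) + a i < lin n (fun j => a (i.succAbove j)) y)) / 2 :=
        tail_split a i (t + δ)
      have hqm_nonneg := cubePr_nonneg n (fun y => t - a i < lin n (fun j => a (i.succAbove j)) y)
      have hqp_nonneg := cubePr_nonneg n (fun y => t + a i < lin n (fun j => a (i.succAbove j)) y)
      rcases lt_or_ge t (a i) with htai | htai
      · -- subcase t < a i : Chebyshev on the full sum
        have hqhalf : 1 / 2 ≤ cubePr n (fun y => t - a i < lin n (fun j => a (i.succAbove j)) y) :=
          half_le_tail _ (by linarith)
        have hε4 : 1 / 4 ≤ ε := by rw [hsplitε]; linarith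
        have hLle : L ≤ Real.log 4 := by
          rw [hLdef]
          apply Real.log_le_log (by positivity)
          rw [div_le_iff₀ hεpos]
          linarith
        have hlog4 : Real.log 4 ≤ 1.39 := by
          have h4 : (4:ℝ) = 2 ^ 2 := by norm_num
          rw [h4, Real.log_pow]
          push_cast
          nlinarith [Real.log_two_lt_d9]
        have hsle : s ≤ 1.18 := by
          rw [hsdef]
          apply sqrt_le_of_le_sq (by norm_num)
          nlinarith
        have hδge : 254 ≤ δ := by
          rw [hδdef, le_div_iff₀ hspos]
          nlinarith
        have hcheb := chebyshev a (v := t + δ) (by linarith)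
        rw [hsum] at hcheb
        calc cubePr (n+1) (fun x => t + δ < lin (n+1) a x) ≤ 1 / (t + δ) ^ 2 := hcheb
          _ ≤ 1 / 8 := by
              apply one_div_le_one_div_of_le (by norm_num)
              nlinarith
          _ ≤ ε / 2 := by linarith
      · -- subcase a i ≤ t
        rcases lt_or_ge (a i) 1 with hailt | haige
        · -- main subcase : use IH on the reduced system
          set σ := Real.sqrt (1 - (a i) ^ 2) with hσdef
          have hσpos : 0 < σ := Real.sqrt_pos.mpr (by nlinarith)
          have hσ2 : σ ^ 2 = 1 - (a i) ^ 2 := Real.sq_sqrt (by nlinarith)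
          have hbnn : ∀ j, 0 ≤ a (i.succAbove j) / σ := fun j => div_nonneg (ha _) hσpos.le
          have hbsum : ∑ j, (a (i.succAbove j) / σ) ^ 2 = 1 := by
            have : ∀ j : Fin n, (a (i.succAbove j) / σ) ^ 2 = (a (i.succAbove j)) ^ 2 / σ ^ 2 := by
              intro j; rw [div_pow]
            rw [Finset.sum_congr rfl (fun j _ => this j), ← Finset.sum_div, hsum', hσ2]
            exact div_self (by nlinarith)
          have CL : ∀ u : ℝ, 0 ≤ u →
              cubePr n (fun y => u < lin n (fun j => a (i.succAbove j)) y) ≤ 2 * ε →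
              cubePr n (fun y => u + δ < lin n (fun j => a (i.succAbove j)) y)
                ≤ cubePr n (fun y => u < lin n (fun j => a (i.succAbove j)) y) / 2 := by
            intro u hu hle
            rcases eq_or_lt_of_le (cubePr_nonneg n (fun y => u < lin n (fun j => a (i.succAbove j)) y)) with hq0 | hqpos
            · have hmono : cubePr n (fun y => u + δ < lin n (fun j => a (i.succAbove j)) y)
                  ≤ cubePr n (fun y => u < lin n (fun j => a (i.succAbove j)) y) :=
                cubePr_mono (fun y hy => by linarith)
              have hnn := cubePr_nonneg n (fun y => u + δ < lin n (fun j => a (i.succAbove j)) y)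
              linarith
            · set q := cubePr n (fun y => u < lin n (fun j => a (i.succAbove j)) y) with hqdef
              have hrescale : q = cubePr n (fun y => u / σ < lin n (fun j => a (i.succAbove j) / σ) y) := by
                rw [hqdef]
                exact tail_rescale (fun j => a (i.succAbove j)) hσpos u
              have hIH := IH (fun j => a (i.succAbove j) / σ) (u / σ) q hbnn hbsum
                (div_nonneg hu hσpos.le) hrescale hqpos
              set lq := Real.log (1 / q) with hlqdef
              have hlqge : L - Real.log 2 ≤ lq := by
                rw [hlqdef, hLdef]
                have h2q : (1:ℝ) / (2 * ε) ≤ 1 / q := by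
                  apply one_div_le_one_div_of_le hqpos hle
                have hld : Real.log ((1 / ε) / 2) = Real.log (1 / ε) - Real.log 2 :=
                  Real.log_div (one_div_ne_zero (ne_of_gt hεpos)) (by norm_num)
                calc Real.log (1 / ε) - Real.log 2 = Real.log ((1 / ε) / 2) := by rw [hld]
                  _ ≤ Real.log (1 / q) := by
                      apply Real.log_le_log (by positivity)
                      calc (1 / ε) / 2 = 1 / (2 * ε) := by ring
                        _ ≤ 1 / q := h2q
              have hKey : L * σ ^ 2 < lq := by
                have hsq : (Real.sqrt (Real.log 2) / s) ^ 2 = Real.log 2 / L := by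
                  rw [div_pow, Real.sq_sqrt hlog2pos.le, hs2]
                have h1 : Real.log 2 < L * (a i) ^ 2 := by
                  have hsqlt : (Real.sqrt (Real.log 2) / s) ^ 2 < (a i) ^ 2 := by
                    apply pow_lt_pow_left₀ hai (by positivity)
                    norm_num
                  rw [hsq] at hsqlt
                  rw [div_lt_iff₀ hLpos] at hsqlt
                  linarith [hsqlt]
                rw [hσ2]
                nlinarith
              have hlqpos : 0 < lq := lt_of_le_of_lt (by positivity) hKey
              have hshift : 300 / Real.sqrt lq ≤ δ / σ := by
                have h1 : s * σ ≤ Real.sqrt lq := by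
                  have h2 : Real.sqrt (L * σ ^ 2) ≤ Real.sqrt lq := Real.sqrt_le_sqrt hKey.le
                  rw [Real.sqrt_mul hLpos.le, Real.sqrt_sq hσpos.le] at h2
                  rw [hsdef]
                  exact h2
                rw [hδdef, div_div]
                exact div_le_div_of_nonneg_left (by norm_num) (by positivity) h1
              calc cubePr n (fun y => u + δ < lin n (fun j => a (i.succAbove j)) y)
                  = cubePr n (fun y => (u + δ) / σ < lin n (fun j => a (i.succAbove j) / σ) y) :=
                    tail_rescale (fun j => a (i.succAbove j)) hσpos (u + δ)
                _ ≤ cubePr n (fun y => u / σ + 300 / Real.sqrt lq < lin n (fun j => a (i.succAbove j) / σ) y) := by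
                    apply cubePr_mono
                    intro y hy
                    have hsum2 : u / σ + 300 / Real.sqrt lq ≤ (u + δ) / σ := by
                      rw [add_div]
                      linarith [hshift]
                    linarith
                _ ≤ q / 2 := hIH
          have hq1 := CL (t - a i) (by linarith) (by linarith [hsplitε, hqp_nonneg])
          have hq2 := CL (t + a i) (by linarith [haipos.le, ht]) (by linarith [hsplitε, hqm_nonneg])
          rw [hsplitgoal]
          have e1 : cubePr n (fun y => (t + δ) - a i < lin n (fun j => a (i.succAbove j)) y)
              = cubePr n (fun y => (t - a i) + δ < lin n (fun j => a (i.succAbove j)) y) :=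
            cubePr_congr (fun y => by constructor <;> intro h <;> linarith)
          have e2 : cubePr n (fun y => (t + δ) + a i < lin n (fun j => a (i.succAbove j)) y)
              = cubePr n (fun y => (t + a i) + δ < lin n (fun j => a (i.succAbove j)) y) :=
            cubePr_congr (fun y => by constructor <;> intro h <;> linarith)
          rw [e1, e2]
          linarith [hq1, hq2, hsplitε]
        · -- degenerate subcase a i ≥ 1 : contradiction
          exfalso
          have hzero : ∀ j, a (i.succAbove j) = 0 := by
            have hle0 : ∑ j, (a (i.succAbove j)) ^ 2 ≤ 0 := by nlinarith
            have hz : ∑ j, (a (i.succAbove j)) ^ 2 = 0 :=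
              le_antisymm hle0 (Finset.sum_nonneg (fun j _ => by positivity))
            intro j
            have := (Finset.sum_eq_zero_iff_of_nonneg
              (fun k (_ : k ∈ univ) => by positivity : ∀ k ∈ univ, (0:ℝ) ≤ (a (i.succAbove k)) ^ 2)).mp hz j (Finset.mem_univ j)
            nlinarith [this]
          have hlin0 : ∀ y : Fin n → Bool, lin n (fun j => a (i.succAbove j)) y = 0 := by
            intro y
            unfold lin
            apply Finset.sum_eq_zero
            intro j _
            simp [hzero j]
          have hε0 : ε = 0 := by
            rw [hsplitε]
            rw [cubePr_false (fun y => by rw [hlin0 y]; intro hcon; nlinarith),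
              cubePr_false (fun y => by rw [hlin0 y]; intro hcon; nlinarith)]
            norm_num
          linarith
    · -- CASE II : all coordinates light
      push_neg at hcase
      rcases le_or_gt 8 ((t + δ) * δ) with hbig | hsmallcase
      · -- subcase II.a
        have hsqrt75 : Real.sqrt (Real.log 2) ≤ 75 := by
          apply sqrt_le_of_le_sq (by norm_num)
          nlinarith [Real.log_two_lt_d9]
        have hreg : ∀ i, a i ≤ δ / 4 := by
          intro i
          calc a i ≤ Real.sqrt (Real.log 2) / s := hcase i
            _ ≤ 75 / s := by
                apply div_le_div_of_nonneg_right hsqrt75 hspos.le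
            _ = δ / 4 := by rw [hδdef]; ring
        have := caseIIa a ha hsum ht hδpos hreg hbig
        rw [hεdef]
        exact this
      · -- subcase II.b : impossible
        exfalso
        have hδ2 : δ ^ 2 < 8 := by nlinarith
        have hδsq : δ ^ 2 = 90000 / L := by
          rw [hδdef, div_pow, hs2]
          norm_num
        have hLgt : 11250 < L := by
          rw [hδsq, div_lt_iff₀ hLpos] at hδ2
          linarith
        have hsge : 106 ≤ s := by
          have h1 : (106:ℝ) ^ 2 ≤ L := by nlinarith
          calc (106:ℝ) = Real.sqrt (106 ^ 2) := (Real.sqrt_sq (by norm_num)).symm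
            _ ≤ Real.sqrt L := Real.sqrt_le_sqrt h1
            _ = s := by rw [hsdef]
        have htδ : t * δ < 8 := by nlinarith
        have hcancel : (300 / s) * s = 300 := div_mul_cancel₀ 300 (ne_of_gt hspos)
        have htle : t ≤ 8 * s / 300 := by
          rw [hδdef] at htδ
          have h300t : 300 * t < 8 * s := by nlinarith [htδ, hspos, hcancel, ht]
          linarith
        have hlamle : 8 * (t + 1) ≤ 0.29 * s := by
          have hone : 1 ≤ s / 106 := by
            rw [le_div_iff₀ (by norm_num)]
            linarith
          nlinarith
        have hlampos : 0 < 8 * (t + 1) := by linarith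
        have hsqrt84 : Real.sqrt (Real.log 2) ≤ 0.84 := by
          apply sqrt_le_of_le_sq (by norm_num)
          nlinarith [Real.log_two_lt_d9]
        have hcond1 : ∀ i, (8 * (t + 1)) * a i ≤ 1 := by
          intro i
          have hai' : a i ≤ 0.84 / s :=
            (hcase i).trans (div_le_div_of_nonneg_right hsqrt84 hspos.le)
          have hmul : (8 * (t + 1)) * a i ≤ (0.29 * s) * (0.84 / s) :=
            mul_le_mul hlamle hai' (ha i) (by positivity)
          have heq : (0.29 * s) * (0.84 / s) = 0.29 * 0.84 := by
            field_simp
          rw [heq] at hmul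
          linarith
        have hgap : t < (8 * (t + 1)) / 8 - Real.log 2 / (8 * (t + 1)) := by
          have hlamge : (8:ℝ) ≤ 8 * (t + 1) := by linarith
          have hlog2lt : Real.log 2 < 1 := by nlinarith [Real.log_two_lt_d9]
          have hd : Real.log 2 / (8 * (t + 1)) ≤ Real.log 2 / 8 :=
            div_le_div_of_nonneg_left hlog2pos.le (by norm_num) hlamge
          have : (8 * (t + 1)) / 8 = t + 1 := by ring
          rw [this]
          have : Real.log 2 / 8 < 1 := by linarith
          linarith
        have hG := lemmaG a hlampos hcond1 ha hsum hgap
        rw [← hεdef] at hG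
        have hexpmul : Real.exp ((8 * (t + 1)) ^ 2) * Real.exp (-((8 * (t + 1)) ^ 2)) = 1 := by
          rw [← Real.exp_add]
          simp
        have hLle : L ≤ Real.log 4 + (8 * (t + 1)) ^ 2 := by
          rw [hLdef]
          have h1 : 1 / ε ≤ 4 * Real.exp ((8 * (t + 1)) ^ 2) := by
            rw [div_le_iff₀ hεpos]
            nlinarith [hG, Real.exp_pos ((8 * (t + 1)) ^ 2), Real.exp_pos (-((8 * (t + 1)) ^ 2))]
          calc Real.log (1 / ε) ≤ Real.log (4 * Real.exp ((8 * (t + 1)) ^ 2)) :=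
                Real.log_le_log (by positivity) h1
            _ = Real.log 4 + (8 * (t + 1)) ^ 2 := by
                rw [Real.log_mul (by norm_num) (Real.exp_ne_zero _), Real.log_exp]
        have hlog4 : Real.log 4 ≤ 1.39 := by
          have h4 : (4:ℝ) = 2 ^ 2 := by norm_num
          rw [h4, Real.log_pow]
          push_cast
          nlinarith [Real.log_two_lt_d9]
        have hlamsq : (8 * (t + 1)) ^ 2 ≤ 0.0841 * L := by
          have := mul_self_le_mul_self hlampos.le hlamle
          nlinarith [hs2]
        nlinarith [hLle, hlog4, hlamsq, hLgt]

end LC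

/-- **Local Chernoff inequality (Devroye–Lugosi).** There is a universal `C > 0`
such that for Rademacher sums with `∑ aᵢ² = 1`, `t ≥ 0`, `ε = Pr[∑ aᵢxᵢ > t]`,
we have `Pr[∑ aᵢxᵢ > t + C/√(log(1/ε))] ≤ ε/2`. -/
theorem local_chernoff_rademacher :
    ∃ C : ℝ, 0 < C ∧ ∀ (n : ℕ) (a : Fin n → ℝ) (t ε : ℝ),
      (∀ i, 0 ≤ a i) → (∑ i, (a i) ^ 2) = 1 → 0 ≤ t →
      ε = cubePr n (fun x => t < lin n a x) → 0 < ε →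
      cubePr n (fun x => t + C / Real.sqrt (Real.log (1 / ε)) < lin n a x) ≤ ε / 2 :=
  ⟨300, by norm_num, LC.mainInd⟩

end
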